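/- Let ζ be a primitive m-th root of unity with m ≥ 3, λ a nonzero complex number, and n ≥ 3 an integer. Suppose u(x) = ∑_{r=0}^{m-1} β_r·e^{λζ^r x} satisfies ∑_{α=0}^{n-1} λ^{n-1-α}·C_α·u^{(α)} = 0 identically, where C_α = n·S(n-2,n-1-α) − S(n-1,n-1-α). Then β_r = 0 for all r except possibly r = 0 and (when m is even) r = m/2; consequently u' = λu or u'' = λ²u. -/

import Mathlib

/-- `S n α` is the sum over all `α`-element subsets of `{1,...,n}` of the
product of the elements (`S n 0 = 1`, and `S n α = 0` for `α > n`). -/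
def S (n α : ℕ) : ℕ := ∑ A ∈ (Finset.Icc 1 n).powersetCard α, ∏ a ∈ A, a

/-- The coefficients `C_α = n·S(n-2, n-1-α) − S(n-1, n-1-α)`, as complex numbers. -/
def C (n α : ℕ) : ℂ := (n : ℂ) * (S (n - 2) (n - 1 - α) : ℂ) - (S (n - 1) (n - 1 - α) : ℂ)

open Finset

lemma hasDerivAt_cexp_mul (c : ℂ) (x : ℝ) :
    HasDerivAt (fun t : ℝ => Complex.exp (c * t)) (c * Complex.exp (c * x)) x := by
  have h1 : HasDerivAt (fun t : ℝ => (t : ℂ)) 1 x := by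
    simpa using (hasDerivAt_id x).ofReal_comp
  have h2 := (h1.const_mul c).cexp
  simpa [mul_comm] using h2

lemma hasDerivAt_expsum (m : ℕ) (c μ : ℕ → ℂ) (x : ℝ) :
    HasDerivAt (fun t : ℝ => ∑ r ∈ range m, c r * Complex.exp (μ r * t))
      (∑ r ∈ range m, c r * μ r * Complex.exp (μ r * x)) x := by
  refine HasDerivAt.fun_sum fun r _ => ?_
  simpa [mul_assoc, mul_comm, mul_left_comm] using
    (hasDerivAt_cexp_mul (μ r) x).const_mul (c r)

lemma iteratedDeriv_expsum (m k : ℕ) (c μ : ℕ → ℂ) :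
    iteratedDeriv k (fun t : ℝ => ∑ r ∈ range m, c r * Complex.exp (μ r * t))
      = fun x : ℝ => ∑ r ∈ range m, c r * μ r ^ k * Complex.exp (μ r * x) := by
  induction k generalizing c with
  | zero => simp
  | succ k ih =>
    rw [iteratedDeriv_succ']
    have hd : (deriv fun t : ℝ => ∑ r ∈ range m, c r * Complex.exp (μ r * t))
        = fun x : ℝ => ∑ r ∈ range m, (c r * μ r) * Complex.exp (μ r * x) := by
      funext x; exact (hasDerivAt_expsum m c μ x).deriv
    rw [hd, ih (fun r => c r * μ r)]
    funext x; refine Finset.sum_congr rfl fun r _ => ?_; ring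

lemma expsum_coeff_eq_zero (m : ℕ) (c μ : ℕ → ℂ)
    (hμ : ∀ i < m, ∀ j < m, μ i = μ j → i = j)
    (h : ∀ x : ℝ, ∑ r ∈ range m, c r * Complex.exp (μ r * x) = 0) :
    ∀ r < m, c r = 0 := by
  have hpow : ∀ k : ℕ, ∑ r ∈ range m, c r * μ r ^ k = 0 := by
    intro k
    have hfun : (fun t : ℝ => ∑ r ∈ range m, c r * Complex.exp (μ r * t))
        = fun _ => (0 : ℂ) := funext h
    have h0 : iteratedDeriv k (fun _ : ℝ => (0 : ℂ)) = fun _ => 0 := by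
      induction k with
      | zero => simp
      | succ k ih =>
        rw [iteratedDeriv_succ', show (deriv fun _ : ℝ => (0:ℂ)) = fun _ => (0:ℂ) by
          funext x; simp, ih]
    have := congrFun ((iteratedDeriv_expsum m k c μ).symm.trans (by rw [hfun, h0])) 0
    simpa using this
  intro r hr
  set v : Fin m → ℂ := fun i => μ i with hv
  have hvinj : Function.Injective v := by
    intro i j hij
    exact Fin.ext (hμ i i.2 j j.2 hij)
  have hdet : (Matrix.vandermonde v).transpose.det ≠ 0 := by
    rw [Matrix.det_transpose, Matrix.det_vandermonde_ne_zero_iff]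
    exact hvinj
  have hmv : (Matrix.vandermonde v).transpose.mulVec (fun i : Fin m => c i) = 0 := by
    funext i
    have := hpow (i : ℕ)
    rw [Finset.sum_range] at this
    simpa [Matrix.mulVec, Matrix.transpose_apply, Matrix.vandermonde, dotProduct,
      mul_comm] using this
  have := Matrix.eq_zero_of_mulVec_eq_zero hdet hmv
  exact congrFun this ⟨r, hr⟩

lemma S_cast (k j : ℕ) :
    (S k j : ℂ) = ∑ A ∈ (Finset.Icc 1 k).powersetCard j, ∏ a ∈ A, (a : ℂ) := by
  rw [S]; push_cast; rfl

lemma S_eq_zero {k j : ℕ} (h : k < j) : S k j = 0 := by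
  rw [S, Finset.powersetCard_eq_empty.mpr (by simpa using h), Finset.sum_empty]

lemma Sgen (k : ℕ) (z : ℂ) :
    ∑ j ∈ range (k + 1), (S k j : ℂ) * z ^ (k - j)
      = ∏ i ∈ Finset.Icc 1 k, (z + (i : ℂ)) := by
  have hcard : (Finset.Icc 1 k).card = k := by simp
  have h1 : ∏ i ∈ Finset.Icc 1 k, (z + (i : ℂ))
      = ∏ i ∈ Finset.Icc 1 k, ((i : ℂ) + z) :=
    Finset.prod_congr rfl fun i _ => add_comm _ _
  rw [h1, Finset.prod_add, Finset.sum_powerset, hcard]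
  refine Finset.sum_congr rfl fun j hj => ?_
  rw [S_cast, Finset.sum_mul]
  refine Finset.sum_congr rfl fun A hA => ?_
  rw [Finset.mem_powersetCard] at hA
  rw [Finset.prod_const, Finset.card_sdiff_of_subset hA.1, hcard, hA.2]

lemma Pval {n : ℕ} (hn : 3 ≤ n) (z : ℂ) :
    ∑ α ∈ range n, C n α * z ^ α
      = ((n : ℂ) - 1) * (z - 1) * ∏ i ∈ Finset.Icc 1 (n - 2), (z + (i : ℂ)) := by
  have hA : ∑ α ∈ range n, (S (n - 2) (n - 1 - α) : ℂ) * z ^ α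
      = z * ∏ i ∈ Finset.Icc 1 (n - 2), (z + (i : ℂ)) := by
    have h1 : ∑ α ∈ range n, (S (n - 2) (n - 1 - α) : ℂ) * z ^ α
        = ∑ j ∈ range n, (S (n - 2) j : ℂ) * z ^ (n - 1 - j) := by
      rw [← Finset.sum_range_reflect (fun j => (S (n - 2) j : ℂ) * z ^ (n - 1 - j)) n]
      refine Finset.sum_congr rfl fun α hα => ?_
      rw [Finset.mem_range] at hα
      congr 2
      omega
    have hs := Finset.sum_range_succ
      (fun j => (S (n - 2) j : ℂ) * z ^ (n - 1 - j)) (n - 1)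
    rw [show n - 1 + 1 = n by omega] at hs
    rw [h1, hs, S_eq_zero (show n - 2 < n - 1 by omega)]
    simp only [Nat.cast_zero, zero_mul, add_zero]
    have h2 : ∀ j ∈ range (n - 1), (S (n - 2) j : ℂ) * z ^ (n - 1 - j)
        = z * ((S (n - 2) j : ℂ) * z ^ (n - 2 - j)) := by
      intro j hj
      rw [Finset.mem_range] at hj
      rw [show n - 1 - j = (n - 2 - j) + 1 by omega, pow_succ]
      ring
    have hg := Sgen (n - 2) z
    rw [show n - 2 + 1 = n - 1 by omega] at hg
    rw [Finset.sum_congr rfl h2, ← Finset.mul_sum, hg]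
  have hB : ∑ α ∈ range n, (S (n - 1) (n - 1 - α) : ℂ) * z ^ α
      = (z + ((n : ℂ) - 1)) * ∏ i ∈ Finset.Icc 1 (n - 2), (z + (i : ℂ)) := by
    have h1 : ∑ α ∈ range n, (S (n - 1) (n - 1 - α) : ℂ) * z ^ α
        = ∑ j ∈ range n, (S (n - 1) j : ℂ) * z ^ (n - 1 - j) := by
      rw [← Finset.sum_range_reflect (fun j => (S (n - 1) j : ℂ) * z ^ (n - 1 - j)) n]
      refine Finset.sum_congr rfl fun α hα => ?_
      rw [Finset.mem_range] at hα
      congr 2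
      omega
    have hg := Sgen (n - 1) z
    rw [show n - 1 + 1 = n by omega] at hg
    have hp := Finset.prod_Icc_succ_top (by omega : 1 ≤ (n - 2) + 1)
      (fun i : ℕ => z + (i : ℂ))
    rw [show n - 2 + 1 = n - 1 by omega] at hp
    rw [h1, hg, hp]
    have hcast : ((n - 1 : ℕ) : ℂ) = (n : ℂ) - 1 := by
      push_cast [Nat.cast_sub (by omega : 1 ≤ n)]
      ring
    rw [hcast]
    ring
  have hC : ∑ α ∈ range n, C n α * z ^ α
      = (n : ℂ) * (∑ α ∈ range n, (S (n - 2) (n - 1 - α) : ℂ) * z ^ α)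
        - ∑ α ∈ range n, (S (n - 1) (n - 1 - α) : ℂ) * z ^ α := by
    rw [Finset.mul_sum, ← Finset.sum_sub_distrib]
    refine Finset.sum_congr rfl fun α _ => ?_
    rw [C]; ring
  rw [hC, hA, hB]
  ring

theorem stmt_19 (m : ℕ) (hm : 3 ≤ m) (ζ : ℂ) (hζ : IsPrimitiveRoot ζ m)
    (l : ℂ) (hl : l ≠ 0) (n : ℕ) (hn : 3 ≤ n) (β : ℕ → ℂ)
    (u : ℝ → ℂ)
    (hu : u = fun x : ℝ => ∑ r ∈ Finset.range m, β r * Complex.exp (l * ζ ^ r * (x : ℂ)))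
    (hvanish : ∀ x : ℝ,
      ∑ α ∈ Finset.range n, l ^ (n - 1 - α) * C n α * iteratedDeriv α u x = 0) :
    (∀ r : ℕ, r < m → r ≠ 0 → 2 * r ≠ m → β r = 0) ∧
      ((∀ x, deriv u x = l * u x) ∨ (∀ x, deriv (deriv u) x = l ^ 2 * u x)) := by
  set μ : ℕ → ℂ := fun r => l * ζ ^ r with hμdef
  have hud : u = fun x : ℝ => ∑ r ∈ range m, β r * Complex.exp (μ r * x) := hu
  have hiter : ∀ α : ℕ, iteratedDeriv α u
      = fun x : ℝ => ∑ r ∈ range m, β r * μ r ^ α * Complex.exp (μ r * x) := by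
    intro α; rw [hud]; exact iteratedDeriv_expsum m α β μ
  have hμinj : ∀ i < m, ∀ j < m, μ i = μ j → i = j := by
    intro i hi j hj hij
    exact hζ.pow_inj hi hj (mul_left_cancel₀ hl hij)
  have key : ∀ x : ℝ,
      ∑ r ∈ range m,
        (β r * l ^ (n - 1) * ∑ α ∈ range n, C n α * (ζ ^ r) ^ α) *
          Complex.exp (μ r * x) = 0 := by
    intro x
    have hv := hvanish x
    simp only [hiter] at hv
    calc ∑ r ∈ range m,
          (β r * l ^ (n - 1) * ∑ α ∈ range n, C n α * (ζ ^ r) ^ α) *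
            Complex.exp (μ r * x)
        = ∑ r ∈ range m, ∑ α ∈ range n,
            l ^ (n - 1 - α) * C n α * (β r * μ r ^ α * Complex.exp (μ r * x)) := by
          refine Finset.sum_congr rfl fun r _ => ?_
          rw [Finset.mul_sum, Finset.sum_mul]
          refine Finset.sum_congr rfl fun α hα => ?_
          rw [Finset.mem_range] at hα
          have hpow : l ^ (n - 1 - α) * l ^ α = l ^ (n - 1) := by
            rw [← pow_add]; congr 1; omega
          have hmp : μ r ^ α = l ^ α * (ζ ^ r) ^ α := mul_pow _ _ _
          rw [hmp, ← hpow]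
          ring
      _ = ∑ α ∈ range n, ∑ r ∈ range m,
            l ^ (n - 1 - α) * C n α * (β r * μ r ^ α * Complex.exp (μ r * x)) :=
          Finset.sum_comm
      _ = ∑ α ∈ range n, l ^ (n - 1 - α) * C n α *
            ∑ r ∈ range m, β r * μ r ^ α * Complex.exp (μ r * x) := by
          refine Finset.sum_congr rfl fun α _ => ?_
          rw [Finset.mul_sum]
      _ = 0 := hv
  have hcoef := expsum_coeff_eq_zero m
    (fun r => β r * l ^ (n - 1) * ∑ α ∈ range n, C n α * (ζ ^ r) ^ α) μ hμinj key
  have habs : ‖ζ‖ = 1 := by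
    simpa using Complex.norm_eq_one_of_pow_eq_one hζ.pow_eq_one (by omega : m ≠ 0)
  have hpart1 : ∀ r : ℕ, r < m → r ≠ 0 → 2 * r ≠ m → β r = 0 := by
    intro r hr hr0 hr2
    have h := hcoef r hr
    rw [Pval hn (ζ ^ r)] at h
    have hne1 : (n : ℂ) - 1 ≠ 0 := by
      rw [sub_ne_zero]
      exact_mod_cast (by omega : (n : ℕ) ≠ 1)
    have hζr2 : ζ ^ r ≠ -1 := by
      intro hc
      have h21 : ζ ^ (2 * r) = 1 := by
        rw [pow_mul', hc]; ring
      obtain ⟨k, hk⟩ := hζ.dvd_of_pow_eq_one _ h21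
      rcases Nat.lt_or_ge k 2 with hk2 | hk2
      · interval_cases k <;> omega
      · have : m * 2 ≤ m * k := Nat.mul_le_mul_left m hk2
        omega
    have hne2 : ζ ^ r - 1 ≠ 0 := by
      rw [sub_ne_zero]
      exact hζ.pow_ne_one_of_pos_of_lt hr0 hr
    have hne3 : ∏ i ∈ Finset.Icc 1 (n - 2), (ζ ^ r + (i : ℂ)) ≠ 0 := by
      rw [Finset.prod_ne_zero_iff]
      intro i hi
      rw [Finset.mem_Icc] at hi
      intro hc
      have hζri : ζ ^ r = -(i : ℂ) := by linear_combination hc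
      have habs2 : ‖ζ ^ r‖ = (i : ℝ) := by
        rw [hζri]; simp
      rw [norm_pow, habs, one_pow] at habs2
      have hi1 : i = 1 := by exact_mod_cast habs2.symm
      rw [hi1] at hζri
      simp only [Nat.cast_one] at hζri
      exact hζr2 hζri
    have hne : ((n : ℂ) - 1) * (ζ ^ r - 1) * ∏ i ∈ Finset.Icc 1 (n - 2), (ζ ^ r + (i : ℂ)) ≠ 0 :=
      mul_ne_zero (mul_ne_zero hne1 hne2) hne3
    have hl' : l ^ (n - 1) ≠ 0 := pow_ne_zero _ hl
    rcases mul_eq_zero.mp h with h' | h'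
    · rcases mul_eq_zero.mp h' with h'' | h''
      · exact h''
      · exact absurd h'' hl'
    · exact absurd h' hne
  refine ⟨hpart1, Or.inr ?_⟩
  have hd1 : deriv u = fun x : ℝ => ∑ r ∈ range m, β r * μ r * Complex.exp (μ r * x) := by
    funext x; rw [hud]; exact (hasDerivAt_expsum m β μ x).deriv
  intro x
  have hd2 : deriv (deriv u) x
      = ∑ r ∈ range m, (β r * μ r) * μ r * Complex.exp (μ r * x) := by
    rw [hd1]; exact (hasDerivAt_expsum m (fun r => β r * μ r) μ x).deriv
  rw [hd2, hud, Finset.mul_sum]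
  refine Finset.sum_congr rfl fun r hr => ?_
  rw [Finset.mem_range] at hr
  by_cases hβ : β r = 0
  · rw [hβ]; ring
  · have hsq : (ζ ^ r) ^ 2 = 1 := by
      by_cases hr0 : r = 0
      · rw [hr0]; simp
      · by_cases hr2 : 2 * r = m
        · rw [← pow_mul, mul_comm, hr2]
          exact hζ.pow_eq_one
        · exact absurd (hpart1 r hr hr0 hr2) hβ
    have hm2 : μ r * μ r = l ^ 2 := by
      simp only [hμdef]
      calc l * ζ ^ r * (l * ζ ^ r) = l ^ 2 * (ζ ^ r) ^ 2 := by ring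
        _ = l ^ 2 := by rw [hsq, mul_one]
    calc β r * μ r * μ r * Complex.exp (μ r * x)
        = (μ r * μ r) * (β r * Complex.exp (μ r * x)) := by ring
      _ = l ^ 2 * (β r * Complex.exp (μ r * x)) := by rw [hm2]
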